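/- One-step decrement bound: let w ∈ L^2([0,1]^2), c > 1, and suppose S, T ⊆ [0,1] are measurable sets of positive measure with ‖w‖_⊞ ≤ c (λ(S)λ(T))^{-1/2} |∫_{S×T} w|. Let a = ⟨w, 1_{S×T}⟩ / ‖1_{S×T}‖_2^2. Then ‖w − a·1_{S×T}‖_2^2 ≤ ‖w‖_2^2 − c^{-2} ‖w‖_⊞^2. -/

import Mathlib

open MeasureTheory Set

/-- The jumble norm of `u : [0,1]² → ℝ`. -/
noncomputable def jumbleNorm (u : ℝ × ℝ → ℝ) : ℝ :=
  sSup {r : ℝ | ∃ S T : Set ℝ, MeasurableSet S ∧ MeasurableSet T ∧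
    S ⊆ Icc 0 1 ∧ T ⊆ Icc 0 1 ∧ 0 < (volume S).toReal ∧ 0 < (volume T).toReal ∧
    r = |∫ p in S ×ˢ T, u p| / Real.sqrt ((volume S).toReal * (volume T).toReal)}

/-- The `L^2` norm of a function on `[0,1]²`. -/
noncomputable def l2Norm2 (u : ℝ × ℝ → ℝ) : ℝ :=
  (eLpNorm u 2 (volume.restrict (Icc 0 1 ×ˢ Icc 0 1))).toReal

lemma sq_l2 {f : ℝ × ℝ → ℝ} {μ : Measure (ℝ × ℝ)} (hf : MemLp f 2 μ) :
    (eLpNorm f 2 μ).toReal ^ 2 = ∫ x, f x ^ 2 ∂μ := by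
  have h2 : (2 : ENNReal).toReal = (2 : ℝ) := by simp
  have hnn : 0 ≤ ∫ a, ‖f a‖ ^ (2:ℝ) ∂μ :=
    integral_nonneg fun a => Real.rpow_nonneg (norm_nonneg _) _
  rw [hf.eLpNorm_eq_integral_rpow_norm two_ne_zero ENNReal.ofNat_ne_top, h2,
    ENNReal.toReal_ofReal (Real.rpow_nonneg hnn _),
    ← Real.rpow_natCast ((∫ a, ‖f a‖ ^ (2:ℝ) ∂μ) ^ ((2:ℝ))⁻¹) 2,
    ← Real.rpow_mul hnn]
  norm_num

/-- One-step decrement bound in the proof of the weak regularity lemma. -/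
theorem one_step_decrement (w : ℝ × ℝ → ℝ)
    (hw : MemLp w 2 (volume.restrict (Icc 0 1 ×ˢ Icc 0 1)))
    (c : ℝ) (hc : 1 < c)
    (S T : Set ℝ) (hS : MeasurableSet S) (hT : MeasurableSet T)
    (hSsub : S ⊆ Icc 0 1) (hTsub : T ⊆ Icc 0 1)
    (hSpos : 0 < (volume S).toReal) (hTpos : 0 < (volume T).toReal)
    (hbig : jumbleNorm w ≤
      c * (|∫ p in S ×ˢ T, w p| / Real.sqrt ((volume S).toReal * (volume T).toReal))) :
    l2Norm2 (fun p => w p -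
        ((∫ q in S ×ˢ T, w q) / ((volume S).toReal * (volume T).toReal)) *
          (S ×ˢ T).indicator (fun _ => (1:ℝ)) p) ^ 2 ≤
      l2Norm2 w ^ 2 - (1 / c ^ 2) * jumbleNorm w ^ 2 := by
  set μ := volume.restrict (Icc (0:ℝ) 1 ×ˢ Icc (0:ℝ) 1) with hμ
  set I := ∫ q in S ×ˢ T, w q with hI
  set m := (volume S).toReal * (volume T).toReal with hmdef
  have hm : 0 < m := mul_pos hSpos hTpos
  set a := I / m with ha
  set g := (S ×ˢ T).indicator (fun _ => (1:ℝ)) with hg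
  have hST : MeasurableSet (S ×ˢ T) := hS.prod hT
  have hsub2 : S ×ˢ T ⊆ Icc (0:ℝ) 1 ×ˢ Icc (0:ℝ) 1 := prod_mono hSsub hTsub
  -- measure facts
  have hbox : volume (Icc (0:ℝ) 1 ×ˢ Icc (0:ℝ) 1) = 1 := by
    rw [Measure.volume_eq_prod, Measure.prod_prod, Real.volume_Icc]
    norm_num
  haveI : IsFiniteMeasure μ := by
    constructor
    rw [hμ, Measure.restrict_apply_univ, hbox]
    exact ENNReal.one_lt_top
  have hμST : μ (S ×ˢ T) = volume S * volume T := by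
    rw [hμ, Measure.restrict_apply hST, inter_eq_self_of_subset_left hsub2,
      Measure.volume_eq_prod, Measure.prod_prod]
  have hμSTfin : μ (S ×ˢ T) ≠ ⊤ := by
    rw [hμ, Measure.restrict_apply hST]
    exact ((measure_mono inter_subset_right).trans_lt (hbox ▸ ENNReal.one_lt_top)).ne
  have hμSTr : (μ (S ×ˢ T)).toReal = m := by
    rw [hμST, ENNReal.toReal_mul]
  -- g is in L²
  have hgmem : MemLp g 2 μ := memLp_indicator_const 2 hST 1 (Or.inr hμSTfin)
  -- integrals
  have hwg_eq : ∀ x, w x * g x = (S ×ˢ T).indicator w x := by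
    intro x
    by_cases hx : x ∈ S ×ˢ T <;> simp [hg, indicator_apply, hx]
  have hwg_int : Integrable (fun x => w x * g x) μ := by
    refine ((hw.integrable one_le_two).indicator hST).congr ?_
    exact Filter.Eventually.of_forall fun x => (hwg_eq x).symm
  have hwg : ∫ x, w x * g x ∂μ = I := by
    rw [integral_congr_ae (Filter.Eventually.of_forall hwg_eq), integral_indicator hST,
      hμ, Measure.restrict_restrict hST, inter_eq_self_of_subset_left hsub2, hI]
  have hg_sq : ∀ x, g x ^ 2 = g x := by
    intro x
    by_cases hx : x ∈ S ×ˢ T <;> simp [hg, indicator_apply, hx]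
  have hg_int : Integrable g μ := hgmem.integrable one_le_two
  have hgg : ∫ x, g x ^ 2 ∂μ = m := by
    rw [integral_congr_ae (Filter.Eventually.of_forall hg_sq), hg,
      integral_indicator_const (1:ℝ) hST, smul_eq_mul, mul_one, measureReal_def, hμSTr]
  have hg_sq_int : Integrable (fun x => g x ^ 2) μ :=
    hg_int.congr (Filter.Eventually.of_forall fun x => (hg_sq x).symm)
  have hw_sq_int : Integrable (fun x => w x ^ 2) μ := by
    have := hw.integrable_sq
    exact this
  -- the difference function
  have hF : MemLp (fun p => w p - a * g p) 2 μ := hw.sub (hgmem.const_mul a)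
  -- expand the square of the L² norm
  have expand : ∫ x, (w x - a * g x) ^ 2 ∂μ = ∫ x, w x ^ 2 ∂μ - I ^ 2 / m := by
    have key : ∀ x, (w x - a * g x) ^ 2
        = w x ^ 2 - (2 * a) * (w x * g x) + a ^ 2 * g x ^ 2 := by
      intro x; ring
    rw [integral_congr_ae (Filter.Eventually.of_forall key)]
    rw [integral_add (by exact hw_sq_int.sub (hwg_int.const_mul _))
      (hg_sq_int.const_mul _), integral_sub hw_sq_int (hwg_int.const_mul _),
      integral_const_mul, integral_const_mul, hwg, hgg]
    rw [ha]
    field_simp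
    ring
  -- jumble norm bound
  have hJnn : 0 ≤ jumbleNorm w := by
    apply Real.sSup_nonneg
    rintro r ⟨S', T', _, _, _, _, _, _, rfl⟩
    positivity
  have hrpos : 0 ≤ |I| / Real.sqrt m := by positivity
  have hsq : jumbleNorm w ^ 2 ≤ c ^ 2 * (I ^ 2 / m) := by
    have h1 : jumbleNorm w ^ 2 ≤ (c * (|I| / Real.sqrt m)) ^ 2 :=
      pow_le_pow_left₀ hJnn hbig 2
    calc jumbleNorm w ^ 2 ≤ (c * (|I| / Real.sqrt m)) ^ 2 := h1
      _ = c ^ 2 * (I ^ 2 / m) := by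
          rw [mul_pow, div_pow, sq_abs, Real.sq_sqrt hm.le]
  have hkey : (1 / c ^ 2) * jumbleNorm w ^ 2 ≤ I ^ 2 / m := by
    have hc2 : (0:ℝ) < c ^ 2 := by positivity
    rw [div_mul_eq_mul_div, one_mul, div_le_iff₀ hc2]
    linarith [hsq]
  -- put it together
  have hL : l2Norm2 (fun p => w p - a * g p) ^ 2 = ∫ x, (w x - a * g x) ^ 2 ∂μ :=
    sq_l2 hF
  have hR : l2Norm2 w ^ 2 = ∫ x, w x ^ 2 ∂μ := sq_l2 hw
  show l2Norm2 (fun p => w p - a * g p) ^ 2 ≤ l2Norm2 w ^ 2 - (1 / c ^ 2) * jumbleNorm w ^ 2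
  rw [hL, hR, expand]
  linarith [hkey]
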